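/- arXiv:1105.4576 — 5 statements merged into one kernel-verified Lean document; each statement's English description precedes it below -/
import Mathlib

section
/- Let p be a prime and r a positive multiple of p. If (-1)^w * C(r-1, w) ≡ 1 (mod p) for every integer w with r/2 ≤ w ≤ r-1, then C(r, k) ≡ 0 (mod p) for all 1 ≤ k ≤ r-1, and hence r is a power of p. -/
private lemma aux_pow (p : ℕ) (hp : p.Prime) : ∀ r, 0 < r → p ∣ r →
    (∀ k, 1 ≤ k → k ≤ r - 1 → p ∣ Nat.choose r k) → ∃ m, r = p ^ m := by
  haveI : Fact p.Prime := ⟨hp⟩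
  intro r
  induction r using Nat.strong_induction_on with
  | _ r ih =>
  intro hr hpr hdvd
  obtain ⟨s, rfl⟩ := hpr
  have hp2 := hp.two_le
  have hs : 0 < s := by
    rcases Nat.eq_zero_or_pos s with h0 | h0
    · simp [h0] at hr
    · exact h0
  rcases eq_or_lt_of_le (show 1 ≤ s from hs) with hs1 | hs2
  · exact ⟨1, by simp [← hs1]⟩
  · -- s ≥ 2
    have hps : p ∣ s := by
      have h1 : p ∣ Nat.choose (p * s) p := hdvd p hp.one_lt.le (by
        have h2p : 2 * p ≤ p * s := by nlinarith
        omega)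
      have h2 := @Choose.choose_modEq_choose_mod_mul_choose_div_nat (p * s) p p ⟨hp⟩
      simp [Nat.mul_mod_right, Nat.mul_div_cancel_left _ (by omega : 0 < p),
        Nat.mod_self, Nat.div_self (by omega : 0 < p)] at h2
      have := ((Nat.modEq_zero_iff_dvd).2 h1).symm.trans h2
      exact (Nat.modEq_zero_iff_dvd).1 this.symm
    have hsd : ∀ j, 1 ≤ j → j ≤ s - 1 → p ∣ Nat.choose s j := by
      intro j hj1 hj2
      have hk1 : 1 ≤ p * j := Nat.mul_pos (by omega) hj1
      have hk2 : p * j ≤ p * s - 1 := by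
        have : p * j ≤ p * (s - 1) := Nat.mul_le_mul_left _ hj2
        have : p * (s - 1) ≤ p * s - 1 := by
          rw [Nat.mul_sub_one]
          omega
        omega
      have h1 := hdvd (p * j) hk1 hk2
      have h2 := @Choose.choose_modEq_choose_mod_mul_choose_div_nat (p * s) (p * j) p ⟨hp⟩
      simp [Nat.mul_mod_right, Nat.mul_div_cancel_left _ (by omega : 0 < p)] at h2
      have := ((Nat.modEq_zero_iff_dvd).2 h1).symm.trans h2
      exact (Nat.modEq_zero_iff_dvd).1 this.symm
    obtain ⟨m, hm⟩ := ih s (by nlinarith) hs hps hsd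
    exact ⟨m + 1, by rw [hm, pow_succ, mul_comm]⟩

/-- Let `p` be a prime and `r` a positive multiple of `p`.  If
`(-1)^w * C(r-1, w) ≡ 1 (mod p)` for every `w` with `r/2 ≤ w ≤ r-1`, then
`C(r, k) ≡ 0 (mod p)` for all `1 ≤ k ≤ r-1`, and hence `r` is a power of `p`. -/
theorem stmt_1 (p r : ℕ) (hp : p.Prime) (hr : 0 < r) (hpr : p ∣ r)
    (h : ∀ w : ℕ, r / 2 ≤ w → w ≤ r - 1 →
      ((-1) ^ w * (Nat.choose (r - 1) w : ZMod p)) = 1) :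
    (∀ k : ℕ, 1 ≤ k → k ≤ r - 1 → ((Nat.choose r k : ZMod p)) = 0) ∧
      ∃ m : ℕ, r = p ^ m := by
  haveI : Fact p.Prime := ⟨hp⟩
  have hp2 := hp.two_le
  have hr2 : 2 ≤ r := le_trans hp2 (Nat.le_of_dvd hr hpr)
  -- step A: choose (r-1) w = (-1)^w for r/2 ≤ w ≤ r-1
  have hA : ∀ w : ℕ, r / 2 ≤ w → w ≤ r - 1 →
      ((Nat.choose (r - 1) w : ZMod p)) = (-1) ^ w := by
    intro w h1 h2
    have h3 := h w h1 h2
    have h4 : ((-1 : ZMod p) ^ w) * ((-1) ^ w * (Nat.choose (r - 1) w : ZMod p))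
        = (-1) ^ w * 1 := by rw [h3]
    rwa [← mul_assoc, ← pow_add, ← two_mul, pow_mul, neg_one_sq, one_pow, one_mul,
      mul_one] at h4
  -- step B: choose r k = 0 for r/2 + 1 ≤ k ≤ r-1
  have hB : ∀ k : ℕ, r / 2 + 1 ≤ k → k ≤ r - 1 → ((Nat.choose r k : ZMod p)) = 0 := by
    intro k h1 h2
    have hk1 : 1 ≤ k := by omega
    have hpas : Nat.choose r k = Nat.choose (r - 1) (k - 1) + Nat.choose (r - 1) k := by
      have : r = (r - 1) + 1 := by omega
      rw [this]
      have : k = (k - 1) + 1 := by omega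
      rw [this]
      simp [Nat.choose_succ_succ]
    rw [hpas]
    push_cast
    rw [hA (k - 1) (by omega) (by omega), hA k (by omega) h2]
    rw [show ((-1 : ZMod p)) ^ k = (-1) ^ (k - 1) * (-1) by
      rw [← pow_succ]; congr 1; omega]
    ring
  have main : ∀ k : ℕ, 1 ≤ k → k ≤ r - 1 → ((Nat.choose r k : ZMod p)) = 0 := by
    intro k hk1 hk2
    by_cases hc1 : r / 2 + 1 ≤ k
    · exact hB k hc1 hk2
    · -- k ≤ r/2
      push_neg at hc1
      by_cases hc2 : r / 2 + 1 ≤ r - k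
      · rw [← Nat.choose_symm (by omega : k ≤ r)]
        exact hB (r - k) hc2 (by omega)
      · -- then r even, k = r/2, and p = 2
        push_neg at hc2
        have hreven : r = 2 * k := by omega
        have hparity : ((-1 : ZMod p)) ^ (r - 1) = 1 := by
          have := hA (r - 1) (by omega) le_rfl
          rwa [Nat.choose_self, Nat.cast_one, eq_comm] at this
        have hodd : (r - 1) % 2 = 1 := by omega
        have hneg : ((-1 : ZMod p)) ^ (r - 1) = -1 := by
          rw [← Nat.div_add_mod (r - 1) 2, pow_add, pow_mul, neg_one_sq, one_pow, one_mul,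
            hodd, pow_one]
        have h2z : (2 : ZMod p) = 0 := by
          have : (-1 : ZMod p) = 1 := hneg ▸ hparity
          linear_combination -this
        -- choose r k = choose (r-1) (k-1) + choose (r-1) k with the two terms equal
        have hpas : Nat.choose r k = Nat.choose (r - 1) (k - 1) + Nat.choose (r - 1) k := by
          have e1 : r = (r - 1) + 1 := by omega
          rw [e1]
          have e2 : k = (k - 1) + 1 := by omega
          rw [e2]
          simp [Nat.choose_succ_succ]
        have hsym : Nat.choose (r - 1) (k - 1) = Nat.choose (r - 1) k := by
          have : r - 1 - k = k - 1 := by omega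
          rw [← Nat.choose_symm (by omega : k ≤ r - 1), this]
        rw [hpas, hsym]
        push_cast
        rw [← two_mul, h2z, zero_mul]
  refine ⟨main, aux_pow p hp r hr hpr ?_⟩
  intro k hk1 hk2
  exact (ZMod.natCast_eq_zero_iff _ _).1 (main k hk1 hk2)
end

section
/- For all integers s, t ≥ 1, the number m_{s,t} := (1/(s+t)) * Σ_{d | gcd(s,t)} μ(d) * ((s+t)/d)! / ((s/d)! * (t/d)!) is a positive integer. -/
open Function Finset
namespace WittAux

def trueCount {α : Type*} [Fintype α] (w : α → Bool) : ℕ :=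
  (univ.filter fun x => w x = true).card

def rot (n : ℕ) (w : ZMod n → Bool) : ZMod n → Bool := fun x => w (x + 1)

variable {n : ℕ}

lemma rot_iterate (k : ℕ) (w : ZMod n → Bool) (x : ZMod n) :
    (rot n)^[k] w x = w (x + (k : ZMod n)) := by
  induction k generalizing x with
  | zero => simp
  | succ k ih =>
      rw [Function.iterate_succ_apply', rot, ih]
      push_cast
      ring_nf

lemma isPeriodicPt_rot_iff {k : ℕ} {w : ZMod n → Bool} :
    IsPeriodicPt (rot n) k w ↔ ∀ x, w (x + (k : ZMod n)) = w x := by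
  constructor
  · intro h x
    have := congrFun h x
    rwa [rot_iterate] at this
  · intro h
    funext x
    rw [rot_iterate]
    exact h x

instance [NeZero n] (k : ℕ) (w : ZMod n → Bool) : Decidable (IsPeriodicPt (rot n) k w) :=
  inferInstanceAs (Decidable ((rot n)^[k] w = w))

section Count

variable {m d : ℕ} [NeZero n] [NeZero m] (hmd : m * d = n)

/-- expand a word of length `m` to one of length `n` by periodic repetition -/
def emb (v : ZMod m → Bool) : ZMod n → Bool := fun x => v (x.val : ZMod m)

/-- restrict a word of length `n` to one of length `m` -/
def restrict (w : ZMod n → Bool) : ZMod m → Bool := fun y => w ((y.val : ℕ) : ZMod n)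

include hmd

lemma natCast_mod_zmod (a : ℕ) : ((a % n : ℕ) : ZMod m) = (a : ZMod m) := by
  have hdvd : m ∣ n := ⟨d, hmd.symm⟩
  conv_rhs => rw [← Nat.div_add_mod a n]
  push_cast
  rw [(ZMod.natCast_eq_zero_iff n m).2 hdvd]
  ring

lemma fiber_card (y : ZMod m) :
    (univ.filter fun x : ZMod n => ((x.val : ℕ) : ZMod m) = y).card = d := by
  have hm : 0 < m := Nat.pos_of_ne_zero (NeZero.ne m)
  have hcard : (range d).card = d := card_range d
  rw [← hcard]
  apply card_bij' (fun x _ => x.val / m) (fun q _ => (((y.val + m * q : ℕ)) : ZMod n))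
  · intro x hx
    simp only [mem_range]
    have hv : x.val < n := ZMod.val_lt x
    have : x.val < m * d := by omega
    exact Nat.div_lt_of_lt_mul this
  · intro q hq
    simp only [mem_range] at hq
    have hlt : y.val + m * q < n := by
      have hy : y.val < m := ZMod.val_lt y
      calc y.val + m * q < m + m * q := by omega
        _ = m * (q + 1) := by ring
        _ ≤ m * d := Nat.mul_le_mul_left m (by omega)
        _ = n := hmd
    simp only [mem_filter, mem_univ, true_and]
    rw [ZMod.val_natCast, Nat.mod_eq_of_lt hlt]
    push_cast
    rw [(ZMod.natCast_eq_zero_iff m m).2 dvd_rfl]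
    simp [ZMod.natCast_rightInverse y]
  · intro x hx
    simp only [mem_filter, mem_univ, true_and] at hx
    have hyval : y.val = x.val % m := by
      rw [← hx, ZMod.val_natCast]
    rw [hyval, Nat.mod_add_div x.val m]
    exact ZMod.natCast_rightInverse x
  · intro q hq
    simp only [mem_range] at hq
    have hy : y.val < m := ZMod.val_lt y
    have hlt : y.val + m * q < n := by
      calc y.val + m * q < m + m * q := by omega
        _ = m * (q + 1) := by ring
        _ ≤ m * d := Nat.mul_le_mul_left m (by omega)
        _ = n := hmd
    rw [ZMod.val_natCast, Nat.mod_eq_of_lt hlt]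
    rw [Nat.add_mul_div_left _ _ hm, Nat.div_eq_of_lt hy, zero_add]

lemma trueCount_emb (v : ZMod m → Bool) : trueCount (emb (n := n) v) = d * trueCount v := by
  classical
  unfold trueCount emb
  rw [card_eq_sum_card_fiberwise (f := fun x : ZMod n => ((x.val : ℕ) : ZMod m))
    (t := univ) (fun x _ => mem_univ _)]
  have hcongr : ∀ y ∈ (univ : Finset (ZMod m)),
      ((univ.filter fun x : ZMod n => v ((x.val : ℕ) : ZMod m) = true).filter
        (fun x => ((x.val : ℕ) : ZMod m) = y)).card = if v y = true then d else 0 := by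
    intro y _
    by_cases hv : v y = true
    · rw [if_pos hv, ← fiber_card hmd y]
      congr 1
      ext x
      simp only [mem_filter, mem_univ, true_and]
      constructor
      · rintro ⟨-, h⟩; exact h
      · intro h; exact ⟨by rw [h]; exact hv, h⟩
    · rw [if_neg hv, Finset.card_eq_zero]
      apply Finset.filter_eq_empty_iff.2
      rintro x hx h2
      simp only [mem_filter, mem_univ, true_and] at hx
      rw [h2] at hx
      exact hv hx
  rw [Finset.sum_congr rfl hcongr, ← Finset.sum_filter, Finset.sum_const, smul_eq_mul, mul_comm]

end Count
end WittAux

namespace WittAux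
open Function Finset
section Count2
variable {n m d : ℕ} [NeZero n] [NeZero m] (hmd : m * d = n)
include hmd

lemma emb_periodic (v : ZMod m → Bool) : IsPeriodicPt (rot n) m (emb (n := n) v) := by
  rw [isPeriodicPt_rot_iff]
  intro x
  unfold emb
  congr 1
  rw [ZMod.val_add, natCast_mod_zmod hmd]
  push_cast
  have h1 : (((m : ZMod n).val : ℕ) : ZMod m) = 0 := by
    rw [ZMod.val_natCast, natCast_mod_zmod hmd, ZMod.natCast_self]
  rw [h1, add_zero]

lemma emb_restrict {w : ZMod n → Bool} (hw : IsPeriodicPt (rot n) m w) :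
    emb (n := n) (restrict (m := m) w) = w := by
  funext x
  unfold emb restrict
  rw [ZMod.val_natCast]
  have hper : IsPeriodicPt (rot n) (m * (x.val / m)) w := hw.mul_const _
  rw [isPeriodicPt_rot_iff] at hper
  have := hper ((x.val % m : ℕ) : ZMod n)
  rw [← Nat.cast_add, Nat.mod_add_div x.val m, ZMod.natCast_rightInverse x] at this
  exact this.symm

lemma restrict_emb (v : ZMod m → Bool) : restrict (m := m) (emb (n := n) v) = v := by
  have hd : 0 < d := by
    rcases Nat.eq_zero_or_pos d with h | h
    · exfalso; exact NeZero.ne n (by rw [← hmd, h, mul_zero])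
    · exact h
  have hmn : m ≤ n := by
    calc m = m * 1 := (mul_one m).symm
      _ ≤ m * d := Nat.mul_le_mul_left m hd
      _ = n := hmd
  funext y
  unfold emb restrict
  simp only []
  congr 1
  rw [ZMod.val_natCast, Nat.mod_eq_of_lt (lt_of_lt_of_le (ZMod.val_lt y) hmn)]
  exact ZMod.natCast_rightInverse y

end Count2

/-- number of boolean words on a fintype with a given count of trues -/
lemma card_trueCount {α : Type*} [Fintype α] [DecidableEq α] (r : ℕ) :
    ((univ : Finset (α → Bool)).filter fun v => trueCount v = r).card
      = (Fintype.card α).choose r := by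
  rw [← Finset.card_univ, ← Finset.card_powersetCard r (univ : Finset α)]
  refine card_bij' (fun v _ => univ.filter fun a => v a = true)
    (fun S _ => fun a => decide (a ∈ S)) ?_ ?_ ?_ ?_
  · intro v hv
    simp only [mem_filter, mem_univ, true_and] at hv
    rw [Finset.mem_powersetCard]
    exact ⟨Finset.subset_univ _, hv⟩
  · intro S hS
    rw [Finset.mem_powersetCard] at hS
    simp only [mem_filter, mem_univ, true_and]
    unfold trueCount
    rw [← hS.2]
    congr 1
    ext a
    simp
  · intro v hv
    funext a
    simp
  · intro S hS
    ext a
    simp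

end WittAux

namespace WittAux
open Function Finset

lemma F_eval {n m d s : ℕ} [NeZero n] [NeZero m] (hmd : m * d = n) :
    ((univ : Finset (ZMod n → Bool)).filter
        fun w => trueCount w = s ∧ IsPeriodicPt (rot n) m w).card
      = if d ∣ s then m.choose (s / d) else 0 := by
  classical
  by_cases hds : d ∣ s
  · rw [if_pos hds]
    have hct := card_trueCount (α := ZMod m) (s / d)
    rw [ZMod.card m] at hct
    rw [← hct]
    refine card_bij' (fun w _ => restrict (m := m) w) (fun v _ => emb (n := n) v) ?_ ?_ ?_ ?_
    · intro w hw
      simp only [mem_filter, mem_univ, true_and] at hw ⊢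
      have h1 : trueCount (emb (n := n) (restrict (m := m) w)) = d * trueCount (restrict (m := m) w) :=
        trueCount_emb hmd _
      rw [emb_restrict hmd hw.2, hw.1] at h1
      have hd : 0 < d := by
        rcases Nat.eq_zero_or_pos d with h | h
        · exfalso; exact NeZero.ne n (by rw [← hmd, h, mul_zero])
        · exact h
      rw [h1, Nat.mul_div_cancel_left _ hd]
    · intro v hv
      simp only [mem_filter, mem_univ, true_and] at hv ⊢
      refine ⟨?_, emb_periodic hmd v⟩
      rw [trueCount_emb hmd, hv, Nat.mul_div_cancel' hds]
    · intro w hw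
      simp only [mem_filter, mem_univ, true_and] at hw
      exact emb_restrict hmd hw.2
    · intro v _
      exact restrict_emb hmd v
  · rw [if_neg hds, Finset.card_eq_zero]
    apply Finset.filter_eq_empty_iff.2
    rintro w - ⟨h1, h2⟩
    apply hds
    have := trueCount_emb hmd (restrict (m := m) w)
    rw [emb_restrict hmd h2, h1] at this
    exact ⟨_, this⟩

end WittAux

namespace WittAux
open Function Finset

open ArithmeticFunction ArithmeticFunction.Moebius in
lemma count_aperiodic (n s : ℕ) [NeZero n] :
    (((univ : Finset (ZMod n → Bool)).filter fun w =>
        trueCount w = s ∧ minimalPeriod (rot n) w = n).card : ℤ)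
      = ∑ d ∈ n.divisors, (μ d : ℤ) * (if d ∣ s then ((n / d).choose (s / d) : ℤ) else 0) := by
  classical
  set f : ℕ → ℤ := fun e => (((univ : Finset (ZMod n → Bool)).filter fun w =>
      trueCount w = s ∧ minimalPeriod (rot n) w = e).card : ℤ) with hf
  set F : ℕ → ℤ := fun k => (((univ : Finset (ZMod n → Bool)).filter fun w =>
      trueCount w = s ∧ IsPeriodicPt (rot n) k w).card : ℤ) with hF
  have key : ∀ k > 0, ∑ e ∈ k.divisors, f e = F k := by
    intro k hk
    have hmem : ∀ w ∈ (univ : Finset (ZMod n → Bool)).filter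
        (fun w => trueCount w = s ∧ IsPeriodicPt (rot n) k w),
        minimalPeriod (rot n) w ∈ k.divisors := by
      intro w hw
      simp only [mem_filter, mem_univ, true_and] at hw
      rw [Nat.mem_divisors]
      exact ⟨hw.2.minimalPeriod_dvd, by omega⟩
    have hcard := Finset.card_eq_sum_card_fiberwise hmem
    rw [hF]
    simp only
    rw [hcard]
    push_cast
    apply Finset.sum_congr rfl
    intro e he
    rw [Nat.mem_divisors] at he
    have hset : ((univ : Finset (ZMod n → Bool)).filter fun w =>
          trueCount w = s ∧ minimalPeriod (rot n) w = e)
        = (((univ : Finset (ZMod n → Bool)).filter fun w =>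
            trueCount w = s ∧ IsPeriodicPt (rot n) k w).filter
          fun w => minimalPeriod (rot n) w = e) := by
      ext w
      simp only [mem_filter, mem_univ, true_and]
      constructor
      · rintro ⟨h1, h3⟩
        refine ⟨⟨h1, ?_⟩, h3⟩
        rw [Function.isPeriodicPt_iff_minimalPeriod_dvd, h3]
        exact he.1
      · rintro ⟨⟨h1, _⟩, h3⟩; exact ⟨h1, h3⟩
    rw [hf]
    simp only
    rw [hset]
  have hmob := (ArithmeticFunction.sum_eq_iff_sum_smul_moebius_eq (R := ℤ)
    (f := f) (g := F)).mp key n (Nat.pos_of_ne_zero (NeZero.ne n))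
  rw [← Nat.map_div_right_divisors, Finset.sum_map] at hmob
  rw [show (((univ : Finset (ZMod n → Bool)).filter fun w =>
      trueCount w = s ∧ minimalPeriod (rot n) w = n).card : ℤ) = f n from rfl]
  rw [← hmob]
  apply Finset.sum_congr rfl
  intro d hd
  rw [Nat.mem_divisors] at hd
  have hnd : (n / d) * d = n := Nat.div_mul_cancel hd.1
  have hne : NeZero (n / d) := ⟨by
    intro h
    rw [h, zero_mul] at hnd
    exact NeZero.ne n hnd.symm⟩
  simp only [Function.Embedding.coeFn_mk, smul_eq_mul]
  congr 1
  rw [hF]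
  show (((univ : Finset (ZMod n → Bool)).filter fun w =>
      trueCount w = s ∧ IsPeriodicPt (rot n) (n / d) w).card : ℤ) = _
  rw [F_eval hnd]
  split_ifs with h <;> simp

end WittAux

namespace WittAux
open Function Finset

def shift {n : ℕ} (a : ZMod n) (w : ZMod n → Bool) : ZMod n → Bool := fun x => w (x + a)

variable {n : ℕ} [NeZero n]

lemma trueCount_shift (a : ZMod n) (w : ZMod n → Bool) :
    trueCount (shift a w) = trueCount w := by
  unfold trueCount shift
  refine card_bij' (fun x _ => x + a) (fun y _ => y - a) ?_ ?_ ?_ ?_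
  · intro x hx
    simp only [mem_filter, mem_univ, true_and] at hx ⊢
    exact hx
  · intro y hy
    simp only [mem_filter, mem_univ, true_and] at hy ⊢
    rwa [sub_add_cancel]
  · intro x _; ring
  · intro y _; ring

lemma isPeriodicPt_shift_iff (a : ZMod n) (w : ZMod n → Bool) (k : ℕ) :
    IsPeriodicPt (rot n) k (shift a w) ↔ IsPeriodicPt (rot n) k w := by
  simp only [isPeriodicPt_rot_iff, shift]
  constructor
  · intro h x
    have := h (x - a)
    rw [sub_add_cancel] at this
    rw [show x - a + (k : ZMod n) + a = x + (k : ZMod n) by ring] at this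
    exact this
  · intro h x
    rw [show x + (k : ZMod n) + a = (x + a) + (k : ZMod n) by ring]
    exact h (x + a)

lemma minimalPeriod_shift (a : ZMod n) (w : ZMod n → Bool) :
    minimalPeriod (rot n) (shift a w) = minimalPeriod (rot n) w := by
  apply Nat.dvd_antisymm
  · exact ((isPeriodicPt_shift_iff a w _).2
      (isPeriodicPt_minimalPeriod (rot n) w)).minimalPeriod_dvd
  · exact ((isPeriodicPt_shift_iff a w _).1
      (isPeriodicPt_minimalPeriod (rot n) (shift a w))).minimalPeriod_dvd

lemma card_aperiodic_eq_mul (s : ℕ) :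
    ∃ M : ℕ, ((univ : Finset (ZMod n → Bool)).filter fun w =>
        trueCount w = s ∧ minimalPeriod (rot n) w = n).card = n * M := by
  classical
  set X := {w : ZMod n → Bool // trueCount w = s ∧ minimalPeriod (rot n) w = n} with hX
  letI : AddAction (ZMod n) X :=
    { vadd := fun a w => ⟨shift a w.1, by
        rw [trueCount_shift, minimalPeriod_shift]; exact w.2⟩
      zero_vadd := fun w => Subtype.ext (funext fun x =>
        show w.1 (x + 0) = w.1 x by rw [add_zero])
      add_vadd := fun a b w => Subtype.ext (funext fun x =>
        show w.1 (x + (a + b)) = w.1 (x + a + b) by rw [add_assoc]) }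
  have hstab : ∀ x : X, AddAction.stabilizer (ZMod n) x = ⊥ := by
    intro x
    ext a
    simp only [AddAction.mem_stabilizer_iff, AddSubgroup.mem_bot]
    constructor
    · intro h
      have hsh : shift a x.1 = x.1 := congrArg Subtype.val h
      have hper : IsPeriodicPt (rot n) a.val x.1 := by
        rw [isPeriodicPt_rot_iff]
        intro y
        rw [ZMod.natCast_rightInverse a]
        exact congrFun hsh y
      have hdvd : n ∣ a.val := by
        have := hper.minimalPeriod_dvd
        rwa [x.2.2] at this
      have h0 : a.val = 0 := Nat.eq_zero_of_dvd_of_lt hdvd (ZMod.val_lt a)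
      calc a = ((a.val : ℕ) : ZMod n) := (ZMod.natCast_rightInverse a).symm
        _ = 0 := by rw [h0]; simp
    · intro h
      rw [h]
      exact zero_vadd _ x
  haveI : Fintype X := by unfold X; infer_instance
  haveI : Fintype (Quotient (AddAction.orbitRel (ZMod n) X)) := Quotient.fintype _
  have hterm : ∀ ω : Quotient (AddAction.orbitRel (ZMod n) X),
      Fintype.card (ZMod n) / Fintype.card (AddAction.stabilizer (ZMod n) (Quotient.out ω)) = n := by
    intro ω
    have h1 : Fintype.card (AddAction.stabilizer (ZMod n) (Quotient.out ω)) = 1 := by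
      rw [← Nat.card_eq_fintype_card, hstab]
      exact AddSubgroup.card_bot
    rw [ZMod.card, h1, Nat.div_one]
  have hclass := AddAction.card_eq_sum_card_addGroup_sub_card_stabilizer (ZMod n) X
  rw [Finset.sum_congr rfl (fun ω _ => hterm ω), Finset.sum_const, smul_eq_mul] at hclass
  refine ⟨Fintype.card (Quotient (AddAction.orbitRel (ZMod n) X)), ?_⟩
  calc ((univ : Finset (ZMod n → Bool)).filter fun w =>
        trueCount w = s ∧ minimalPeriod (rot n) w = n).card
      = Fintype.card X := (Fintype.card_of_subtype _ (fun x => by simp)).symm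
    _ = n * Fintype.card (Quotient (AddAction.orbitRel (ZMod n) X)) := by
        rw [hclass, Finset.card_univ, mul_comm]

end WittAux

namespace WittAux
open Function Finset

variable {n : ℕ} [NeZero n]

lemma w0_count {s t : ℕ} (ht : 1 ≤ t) (hst : s + t = n) :
    trueCount (fun x : ZMod n => decide (x.val < s)) = s := by
  have hsn : s < n := by omega
  unfold trueCount
  rw [← Finset.card_range s]
  refine card_bij' (fun x _ => x.val) (fun k _ => ((k : ℕ) : ZMod n)) ?_ ?_ ?_ ?_
  · intro x hx
    simp only [mem_filter, mem_univ, true_and, decide_eq_true_eq] at hx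
    simpa using hx
  · intro k hk
    simp only [mem_range] at hk
    simp only [mem_filter, mem_univ, true_and, decide_eq_true_eq]
    rw [ZMod.val_natCast, Nat.mod_eq_of_lt (by omega)]
    simpa using hk
  · intro x _
    exact ZMod.natCast_rightInverse x
  · intro k hk
    simp only [mem_range] at hk
    show (((k : ℕ) : ZMod n)).val = k
    rw [ZMod.val_natCast, Nat.mod_eq_of_lt (by omega)]

lemma w0_aperiodic {s t : ℕ} (hs : 1 ≤ s) (ht : 1 ≤ t) (hst : s + t = n) :
    minimalPeriod (rot n) (fun x : ZMod n => decide (x.val < s)) = n := by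
  set w : ZMod n → Bool := fun x => decide (x.val < s) with hw
  have hnpos : 0 < n := Nat.pos_of_ne_zero (NeZero.ne n)
  have hper : IsPeriodicPt (rot n) n w := by
    rw [isPeriodicPt_rot_iff]
    intro x
    rw [ZMod.natCast_self, add_zero]
  set e := minimalPeriod (rot n) w with he
  have hdvd : e ∣ n := hper.minimalPeriod_dvd
  by_contra hne
  have hepos : 0 < e := by
    rcases Nat.eq_zero_or_pos e with h | h
    · rw [h] at hdvd; omega
    · exact h
  have helt : e < n := lt_of_le_of_ne (Nat.le_of_dvd hnpos hdvd) hne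
  have h2e : 2 * e ≤ n := by
    obtain ⟨c, hc⟩ := hdvd
    rcases Nat.lt_or_ge c 2 with h | h
    · interval_cases c <;> omega
    · calc 2 * e ≤ e * c := by nlinarith
        _ = n := hc.symm
  have hpe := isPeriodicPt_minimalPeriod (rot n) w
  rw [← he, isPeriodicPt_rot_iff] at hpe
  -- Claim A : e ≥ t + 1
  have hA : t + 1 ≤ e := by
    have h1 := hpe (((s - 1 : ℕ)) : ZMod n)
    rw [← Nat.cast_add] at h1
    have hv1 : (((s - 1 + e : ℕ)) : ZMod n).val = (s - 1 + e) % n := ZMod.val_natCast n _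
    have hv2 : (((s - 1 : ℕ)) : ZMod n).val = s - 1 := by
      rw [ZMod.val_natCast, Nat.mod_eq_of_lt (by omega)]
    rw [hw] at h1
    simp only [decide_eq_decide, hv1, hv2] at h1
    by_contra hAc
    have hlt : s - 1 + e < n := by omega
    rw [Nat.mod_eq_of_lt hlt] at h1
    omega
  -- Claim B : e ≥ s + 1
  have hB : s + 1 ≤ e := by
    have h1 := hpe (((n - 1 : ℕ)) : ZMod n)
    rw [← Nat.cast_add] at h1
    have hv1 : (((n - 1 + e : ℕ)) : ZMod n).val = e - 1 := by
      rw [ZMod.val_natCast, Nat.mod_eq_sub_mod (by omega), Nat.mod_eq_of_lt (by omega)]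
      omega
    have hv2 : (((n - 1 : ℕ)) : ZMod n).val = n - 1 := by
      rw [ZMod.val_natCast, Nat.mod_eq_of_lt (by omega)]
    rw [hw] at h1
    simp only [decide_eq_decide, hv1, hv2] at h1
    omega
  omega

end WittAux


open WittAux Function Finset

open ArithmeticFunction ArithmeticFunction.Moebius in
/-- For all integers `s, t ≥ 1`, the Witt-type number
`m_{s,t} = (1/(s+t)) * Σ_{d ∣ gcd(s,t)} μ(d) * ((s+t)/d)! / ((s/d)! (t/d)!)`
is a positive integer. -/
theorem stmt_3 (s t : ℕ) (hs : 1 ≤ s) (ht : 1 ≤ t) :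
    ∃ n : ℕ, 0 < n ∧
      (n : ℚ) = (1 / ((s : ℚ) + t)) *
        ∑ d ∈ (Nat.gcd s t).divisors,
          (μ d : ℚ) * (Nat.factorial ((s + t) / d)) /
            ((Nat.factorial (s / d)) * (Nat.factorial (t / d))) := by

  classical
  set n := s + t with hn
  haveI : NeZero n := ⟨by omega⟩
  obtain ⟨M, hM⟩ := WittAux.card_aperiodic_eq_mul (n := n) s
  have hpos : 0 < ((univ : Finset (ZMod n → Bool)).filter fun w =>
      trueCount w = s ∧ Function.minimalPeriod (rot n) w = n).card := by
    rw [Finset.card_pos]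
    refine ⟨fun x : ZMod n => decide (x.val < s), ?_⟩
    simp only [Finset.mem_filter, Finset.mem_univ, true_and]
    exact ⟨w0_count ht hn.symm, w0_aperiodic hs ht hn.symm⟩
  have hMpos : 0 < M := by
    rcases Nat.eq_zero_or_pos M with h | h
    · rw [h, mul_zero] at hM; omega
    · exact h
  have hcount := count_aperiodic n s
  rw [hM] at hcount
  -- restrict the sum to divisors of the gcd
  have hfilter : n.divisors.filter (· ∣ s) = (Nat.gcd s t).divisors := by
    ext d
    simp only [Finset.mem_filter, Nat.mem_divisors, Nat.dvd_gcd_iff]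
    constructor
    · rintro ⟨⟨hdn, -⟩, hds⟩
      refine ⟨⟨hds, ?_⟩, ?_⟩
      · have : d ∣ n - s := Nat.dvd_sub hdn hds
        rwa [hn, Nat.add_sub_cancel_left] at this
      · intro h0
        have := Nat.eq_zero_of_gcd_eq_zero_left h0
        omega
    · rintro ⟨⟨hds, hdt⟩, -⟩
      exact ⟨⟨by rw [hn]; exact dvd_add hds hdt, NeZero.ne n⟩, hds⟩
  have hstep : ∑ d ∈ n.divisors, (μ d : ℤ) * (if d ∣ s then ((n / d).choose (s / d) : ℤ) else 0)
      = ∑ d ∈ (Nat.gcd s t).divisors, (μ d : ℤ) * ((n / d).choose (s / d) : ℤ) := by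
    rw [← hfilter, Finset.sum_filter]
    apply Finset.sum_congr rfl
    intro d _
    rw [mul_ite, mul_zero]
  rw [hstep] at hcount
  -- now hcount : ((n * M : ℕ) : ℤ) = ∑ ...
  refine ⟨M, hMpos, ?_⟩
  have hQ : ((s : ℚ) + t) * M = ∑ d ∈ (Nat.gcd s t).divisors,
      (μ d : ℚ) * (((n / d).choose (s / d) : ℕ) : ℚ) := by
    have := congrArg (fun z : ℤ => (z : ℚ)) hcount
    push_cast at this
    rw [hn] at this ⊢
    push_cast at this ⊢
    linarith [this]
  have hterm : ∀ d ∈ (Nat.gcd s t).divisors,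
      (μ d : ℚ) * (Nat.factorial ((s + t) / d)) /
          ((Nat.factorial (s / d)) * (Nat.factorial (t / d)))
        = (μ d : ℚ) * (((n / d).choose (s / d) : ℕ) : ℚ) := by
    intro d hd
    rw [Nat.mem_divisors] at hd
    have hds : d ∣ s := hd.1.trans (Nat.gcd_dvd_left s t)
    have hdt : d ∣ t := hd.1.trans (Nat.gcd_dvd_right s t)
    have hdpos : 0 < d := Nat.pos_of_dvd_of_pos hds (by omega)
    have hsplit : (s + t) / d = s / d + t / d := Nat.add_div_of_dvd_right hds
    have hle : s / d ≤ (s + t) / d := Nat.div_le_div_right (by omega)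
    have hsub : (s + t) / d - s / d = t / d := by omega
    rw [Nat.cast_choose ℚ hle, hsub, mul_div_assoc]
  rw [Finset.sum_congr rfl hterm, ← hQ]
  have hne : ((s : ℚ) + t) ≠ 0 := by positivity
  field_simp
end

section
/- Let p be a prime, m ≥ 1, and r = p^m. Working in the free associative algebra over F_p on noncommuting variables x and y, consider the element S(t) = Σ_{k=0}^{r-1} (x + t y)^k · y · (x + t y)^{r-1-k}, regarded as a polynomial in a commuting indeterminate t with coefficients in the free associative algebra. Then for every c with 1 ≤ c ≤ p^{m-1}, the coefficient of t^{cp-1} in S(t) is zero. -/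
open Polynomial

theorem deriv_pow_noncomm {R : Type*} [Semiring R] (f : R[X]) (n : ℕ) :
    derivative (f ^ n) =
      ∑ k ∈ Finset.range n, f ^ k * derivative f * f ^ (n - 1 - k) := by
  induction n with
  | zero => simp
  | succ n ih =>
    rw [pow_succ', derivative_mul, ih, Finset.mul_sum, Finset.sum_range_succ']
    simp only [Nat.add_sub_cancel, pow_zero, one_mul, ← mul_assoc, ← pow_succ']
    rw [add_comm]
    congr 1
    exact Finset.sum_congr rfl fun k _ => by congr 2; omega

open Polynomial in
/-- Let `p` be prime, `m ≥ 1`, `r = p^m`.  In the free associative algebra over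
`F_p` on noncommuting `x, y`, with a central polynomial variable `t`, set
`S(t) = Σ_{k=0}^{r-1} (x + t y)^k · y · (x + t y)^{r-1-k}`.  Then for every
`1 ≤ c ≤ p^{m-1}`, the coefficient of `t^(c*p-1)` in `S(t)` is zero. -/
theorem stmt_5 (p : ℕ) [Fact p.Prime] (m : ℕ) (hm : 1 ≤ m) (c : ℕ)
    (hc1 : 1 ≤ c) (hc2 : c ≤ p ^ (m - 1)) :
    (∑ k ∈ Finset.range (p ^ m),
        ((C (FreeAlgebra.ι (ZMod p) (0 : Fin 2)) + X * C (FreeAlgebra.ι (ZMod p) (1 : Fin 2))) ^ k *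
          C (FreeAlgebra.ι (ZMod p) (1 : Fin 2)) *
          (C (FreeAlgebra.ι (ZMod p) (0 : Fin 2)) + X * C (FreeAlgebra.ι (ZMod p) (1 : Fin 2))) ^
            (p ^ m - 1 - k))).coeff (c * p - 1) = 0 := by
  set x := FreeAlgebra.ι (ZMod p) (0 : Fin 2)
  set y := FreeAlgebra.ι (ZMod p) (1 : Fin 2)
  have hd : derivative (C x + X * C y) = C y := by
    simp [derivative_mul]
  have : (∑ k ∈ Finset.range (p ^ m),
      ((C x + X * C y) ^ k * C y * (C x + X * C y) ^ (p ^ m - 1 - k)))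
      = derivative ((C x + X * C y) ^ (p ^ m)) := by
    rw [deriv_pow_noncomm, hd]
  rw [this, coeff_derivative]
  have hp : 1 ≤ p := (Fact.out : p.Prime).one_lt.le
  have h1 : 1 ≤ c * p := Nat.le_mul_of_pos_left p (by omega) |>.trans' (by omega)
  have : c * p - 1 + 1 = c * p := by
    have : 1 ≤ c * p := Nat.one_le_iff_ne_zero.mpr (by positivity)
    omega
  have h2 : ((c * p - 1 : ℕ) : FreeAlgebra (ZMod p) (Fin 2)) + 1
      = ((c * p : ℕ) : FreeAlgebra (ZMod p) (Fin 2)) := by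
    rw [← Nat.cast_add_one, this]
  rw [this, h2]
  have h3 : ((c * p : ℕ) : FreeAlgebra (ZMod p) (Fin 2)) = 0 := by
    have : ((c * p : ℕ) : ZMod p) = 0 := by
      simp [ZMod.natCast_self]
    calc ((c * p : ℕ) : FreeAlgebra (ZMod p) (Fin 2))
        = algebraMap (ZMod p) _ ((c * p : ℕ) : ZMod p) := by push_cast; simp [map_natCast]
      _ = 0 := by rw [this, map_zero]
  rw [h3, mul_zero]
end

section
/- Let p be a prime and r a positive multiple of p that is not a power of p. In the free associative algebra over F_p on x, y, consider S(t) = Σ_{k=0}^{r-1} (-1)^k C(r-1, k) (x + t y)^k · y · (x + t y)^{r-1-k} as a polynomial in the central variable t. Then for every v with 1 ≤ v ≤ r/2, the coefficient of t^{v-1} in S(t) is nonzero. -/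
open Polynomial Finset in
lemma cast_choose_pow (p : ℕ) [Fact p.Prime] (a : ℕ) :
    ∀ r : ℕ, ((r.choose (p ^ a) : ℕ) : ZMod p) = ((r / p ^ a : ℕ) : ZMod p) := by
  induction a with
  | zero => intro r; simp
  | succ a ih =>
    intro r
    have h := (Choose.choose_modEq_choose_mod_mul_choose_div_nat
      (p := p) (n := r) (k := p ^ (a+1)))
    have h2 : ((r.choose (p ^ (a+1)) : ℕ) : ZMod p)
        = (((r % p).choose (p ^ (a+1) % p) * (r / p).choose (p ^ (a+1) / p) : ℕ) : ZMod p) :=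
      (ZMod.natCast_eq_natCast_iff _ _ _).mpr h
    have hp0 : 0 < p := (Fact.out : p.Prime).pos
    have hmod : p ^ (a+1) % p = 0 := by
      rw [pow_succ]; exact Nat.mul_mod_left _ _
    have hdiv : p ^ (a+1) / p = p ^ a := by
      rw [pow_succ]; exact Nat.mul_div_cancel _ hp0
    rw [h2, hmod, hdiv, Nat.choose_zero_right, one_mul, ih (r / p),
      Nat.div_div_eq_div_mul, ← pow_succ']

open Polynomial Finset in
lemma shift_pow (R : Type*) [CommRing R] (n : ℕ) (e : ℕ → R) :
    ∀ k : ℕ, ∀ i j : Fin (n+1),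
      ((Matrix.of fun i j : Fin (n+1) =>
        if (j : ℕ) = (i : ℕ) + 1 then e i else 0) ^ k) i j
      = if (j : ℕ) = (i : ℕ) + k then ∏ t ∈ Finset.range k, e ((i : ℕ) + t) else 0 := by
  intro k
  induction k with
  | zero =>
    intro i j
    simp only [pow_zero, Matrix.one_apply, Finset.range_zero, Finset.prod_empty, add_zero]
    congr 1
    simp [Fin.ext_iff, eq_comm]
  | succ k ih =>
    intro i j
    rw [pow_succ, Matrix.mul_apply]
    by_cases h : (i : ℕ) + k ≤ n
    · have hl0 : ((⟨(i : ℕ) + k, by omega⟩ : Fin (n+1)) : ℕ) = (i : ℕ) + k := rfl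
      rw [Finset.sum_eq_single (⟨(i : ℕ) + k, by omega⟩ : Fin (n+1))]
      · rw [ih]
        simp only [Matrix.of_apply, hl0]
        rw [if_true]
        by_cases hj : (j : ℕ) = (i : ℕ) + (k + 1)
        · rw [if_pos (show (j : ℕ) = (i : ℕ) + k + 1 by omega), if_pos hj,
            Finset.prod_range_succ]
        · rw [if_neg (show ¬ (j : ℕ) = (i : ℕ) + k + 1 by omega), if_neg hj, mul_zero]
      · intro l _ hl
        rw [ih, if_neg (fun hc => hl (Fin.ext (by simp only [hl0]; omega))), zero_mul]
      · intro hmem; exact absurd (Finset.mem_univ _) hmem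
    · have hz : ∀ l : Fin (n+1), ((Matrix.of fun i j : Fin (n+1) =>
          if (j : ℕ) = (i : ℕ) + 1 then e i else 0) ^ k) i l *
          (Matrix.of fun i j : Fin (n+1) =>
          if (j : ℕ) = (i : ℕ) + 1 then e i else 0) l j = 0 := by
        intro l
        rw [ih, if_neg (by omega), zero_mul]
      rw [Finset.sum_congr rfl (fun l _ => hz l), Finset.sum_const_zero,
        if_neg (by omega)]

open Polynomial Finset in
lemma exists_good_subset (p : ℕ) [Fact p.Prime] (r : ℕ) (hr : 0 < r) (hpr : p ∣ r)
    (hnp : ¬ ∃ m : ℕ, r = p ^ m) (v : ℕ) (hv1 : 1 ≤ v) (hv2 : v ≤ r / 2) :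
    ∃ T : Finset ℕ, T ⊆ Finset.range r ∧ T.card = v ∧
      (∑ k ∈ T, ((-1 : ZMod p) ^ k * (Nat.choose (r - 1) k : ZMod p))) ≠ 0 := by
  classical
  have hp : p.Prime := Fact.out
  obtain ⟨m, hrm⟩ : p ^ (r.factorization p) ∣ r := Nat.ordProj_dvd r p
  set a := r.factorization p with ha
  set i0 := p ^ a with hi0def
  have hpm : ¬ p ∣ m := by
    have := Nat.not_dvd_ordCompl hp hr.ne'
    rw [← ha, ← hi0def, hrm, Nat.mul_div_cancel_left _
      (Nat.pow_pos hp.pos)] at this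
    exact this
  have hm1 : m ≠ 1 := fun h => hnp ⟨a, by rw [hrm, h, mul_one]⟩
  have hm0 : m ≠ 0 := fun h => by rw [hrm, h, mul_zero] at hr; exact absurd hr (lt_irrefl 0)
  have hm2 : 2 ≤ m := by omega
  have hi0pos : 0 < i0 := Nat.pow_pos hp.pos
  have h2r : i0 * 2 ≤ r := by rw [hrm]; exact Nat.mul_le_mul_left _ hm2
  have hi0r : i0 < r := by omega
  have hC : ((r.choose i0 : ℕ) : ZMod p) ≠ 0 := by
    rw [hi0def, cast_choose_pow, ← hi0def, hrm,
      Nat.mul_div_cancel_left _ hi0pos, Ne, ZMod.natCast_eq_zero_iff]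
    exact hpm
  set b : ℕ → ZMod p := fun k => (-1 : ZMod p) ^ k * (Nat.choose (r - 1) k : ZMod p) with hb
  obtain ⟨r', hr'⟩ : ∃ r', r = r' + 1 := ⟨r - 1, by omega⟩
  obtain ⟨s, hs⟩ : ∃ s, i0 = s + 1 := ⟨i0 - 1, by omega⟩
  have hbne : b s ≠ b i0 := by
    intro h
    apply hC
    have hr1 : r - 1 = r' := by omega
    have hpascal : r.choose i0 = r'.choose s + r'.choose (s + 1) := by
      rw [hr', hs]; exact Nat.choose_succ_succ _ _
    have hneg : ((-1 : ZMod p)) ^ s ≠ 0 :=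
      pow_ne_zero _ (neg_ne_zero.mpr one_ne_zero)
    rw [hb] at h
    simp only [hr1, hs] at h
    have key : ((-1 : ZMod p)) ^ s * ((r'.choose s : ZMod p) + (r'.choose (s+1) : ZMod p)) = 0 := by
      rw [mul_add, h, pow_succ]; ring
    rw [hpascal]
    push_cast
    rcases mul_eq_zero.mp key with h' | h'
    · exact absurd h' hneg
    · exact h'
  -- choose the subset
  have hsr : s < r := by omega
  have hsub : ({s, i0} : Finset ℕ) ⊆ Finset.range r := by
    intro x hx
    simp only [Finset.mem_insert, Finset.mem_singleton] at hx
    rcases hx with h | h <;> simp [h, Finset.mem_range] <;> omega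
  have hcard2 : ({s, i0} : Finset ℕ).card = 2 := by
    rw [Finset.card_insert_of_notMem (by simp; omega), Finset.card_singleton]
  have hcardle : v - 1 ≤ (Finset.range r \ {s, i0}).card := by
    rw [Finset.card_sdiff_of_subset hsub, Finset.card_range, hcard2]
    omega
  obtain ⟨T', hT'sub, hT'card⟩ := Finset.exists_subset_card_eq hcardle
  have hsT' : s ∉ T' := fun h => by
    have := hT'sub h; rw [Finset.mem_sdiff] at this; exact this.2 (by simp)
  have hi0T' : i0 ∉ T' := fun h => by
    have := hT'sub h; rw [Finset.mem_sdiff] at this; exact this.2 (by simp)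
  have hT'range : T' ⊆ Finset.range r := hT'sub.trans (Finset.sdiff_subset)
  by_cases hcase : b s + ∑ k ∈ T', b k ≠ 0
  · refine ⟨insert s T', ?_, ?_, ?_⟩
    · exact Finset.insert_subset (by simp [Finset.mem_range]; omega) hT'range
    · rw [Finset.card_insert_of_notMem hsT', hT'card]; omega
    · rw [Finset.sum_insert hsT']; exact hcase
  · push_neg at hcase
    refine ⟨insert i0 T', ?_, ?_, ?_⟩
    · exact Finset.insert_subset (by simp [Finset.mem_range]; omega) hT'range
    · rw [Finset.card_insert_of_notMem hi0T', hT'card]; omega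
    · rw [Finset.sum_insert hi0T']
      intro h0
      apply hbne
      have : b i0 + ∑ k ∈ T', b k = b s + ∑ k ∈ T', b k := by rw [h0, hcase]
      have := add_right_cancel this
      exact this.symm ▸ rfl


open Polynomial in
/-- Let `p` be a prime and `r` a positive multiple of `p` that is not a power
of `p`.  In the free associative algebra over `F_p` on `x, y`, with central
variable `t`, set
`S(t) = Σ_{k=0}^{r-1} (-1)^k C(r-1,k) (x + t y)^k · y · (x + t y)^{r-1-k}`.
Then for every `1 ≤ v ≤ r/2`, the coefficient of `t^(v-1)` in `S(t)` is
nonzero. -/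
theorem stmt_6 (p : ℕ) [Fact p.Prime] (r : ℕ) (hr : 0 < r) (hpr : p ∣ r)
    (hnp : ¬ ∃ m : ℕ, r = p ^ m) (v : ℕ) (hv1 : 1 ≤ v) (hv2 : v ≤ r / 2) :
    (∑ k ∈ Finset.range r,
        ((-1 : ZMod p) ^ k * (Nat.choose (r - 1) k : ZMod p)) •
          ((C (FreeAlgebra.ι (ZMod p) (0 : Fin 2)) + X * C (FreeAlgebra.ι (ZMod p) (1 : Fin 2))) ^ k *
            C (FreeAlgebra.ι (ZMod p) (1 : Fin 2)) *
            (C (FreeAlgebra.ι (ZMod p) (0 : Fin 2)) + X * C (FreeAlgebra.ι (ZMod p) (1 : Fin 2))) ^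
              (r - 1 - k))).coeff (v - 1) ≠ 0 := by
  classical
  intro h0
  obtain ⟨T, hTsub, hTcard, hTsum⟩ := exists_good_subset p r hr hpr hnp v hv1 hv2
  apply hTsum
  -- matrices over ZMod p
  set Mx : Matrix (Fin (r+1)) (Fin (r+1)) (ZMod p) :=
    Matrix.of fun i j => if (j : ℕ) = (i : ℕ) + 1 ∧ (i : ℕ) ∉ T then 1 else 0 with hMx
  set My : Matrix (Fin (r+1)) (Fin (r+1)) (ZMod p) :=
    Matrix.of fun i j => if (j : ℕ) = (i : ℕ) + 1 ∧ (i : ℕ) ∈ T then 1 else 0 with hMy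
  set φ : FreeAlgebra (ZMod p) (Fin 2) →ₐ[ZMod p] Matrix (Fin (r+1)) (Fin (r+1)) (ZMod p) :=
    FreeAlgebra.lift (ZMod p) (fun i => if i = 0 then Mx else My) with hφ
  have hφx : φ (FreeAlgebra.ι (ZMod p) (0 : Fin 2)) = Mx := by
    rw [hφ, FreeAlgebra.lift_ι_apply, if_pos rfl]
  have hφy : φ (FreeAlgebra.ι (ZMod p) (1 : Fin 2)) = My := by
    rw [hφ, FreeAlgebra.lift_ι_apply, if_neg (by decide)]
  -- shift matrix over polynomials
  set e : ℕ → Polynomial (ZMod p) := fun s => if s ∈ T then X else 1 with he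
  set N : Matrix (Fin (r+1)) (Fin (r+1)) (Polynomial (ZMod p)) :=
    Matrix.of fun i j => if (j : ℕ) = (i : ℕ) + 1 then e i else 0 with hNdef
  have hN : ∀ k : ℕ, ∀ i j : Fin (r+1), (N ^ k) i j
      = if (j : ℕ) = (i : ℕ) + k then ∏ t ∈ Finset.range k, e ((i : ℕ) + t) else 0 :=
    shift_pow (Polynomial (ZMod p)) r e
  have hMyC : My.map C = Matrix.of fun i j : Fin (r+1) =>
      if (j : ℕ) = (i : ℕ) + 1 ∧ (i : ℕ) ∈ T then 1 else 0 := by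
    ext i j
    simp only [Matrix.map_apply, Matrix.of_apply, hMy]
    by_cases h1 : (j : ℕ) = (i : ℕ) + 1 ∧ (i : ℕ) ∈ T <;> simp [h1]
  have hNmat : matPolyEquiv N = C Mx + X * C My := by
    have hNsplit : N = Mx.map C + (X : Polynomial (ZMod p)) • My.map C := by
      ext i j
      simp only [hNdef, Matrix.add_apply, Matrix.map_apply, Matrix.smul_apply,
        Matrix.of_apply, hMx, hMy, he]
      by_cases h1 : (j : ℕ) = (i : ℕ) + 1 <;> by_cases h2 : (i : ℕ) ∈ T <;>
        simp [h1, h2, smul_eq_mul]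
    rw [hNsplit, map_add, matPolyEquiv_map_C, matPolyEquiv_map_smul, matPolyEquiv_map_C,
      Polynomial.map_X]
  -- the key entry computation
  have hrow : ∀ k : ℕ, k ≤ r → ∀ l' : Fin (r+1), (N ^ k * My.map C) 0 l'
      = if (l' : ℕ) = k + 1 ∧ k ∈ T then ∏ t ∈ Finset.range k, e t else 0 := by
    intro k hk l'
    rw [Matrix.mul_apply, Finset.sum_eq_single (⟨k, by omega⟩ : Fin (r+1))]
    · rw [hN, hMyC]
      simp only [Matrix.of_apply]
      rw [if_pos (by simp)]
      by_cases h2 : (l' : ℕ) = k + 1 ∧ k ∈ T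
      · rw [if_pos (by simpa using h2), if_pos h2, mul_one]
        simp
      · rw [if_neg (by simpa using h2), if_neg h2, mul_zero]
    · intro l _ hl
      rw [hN, if_neg, zero_mul]
      intro hc
      exact hl (Fin.ext (by simpa using hc))
    · intro hmem; exact absurd (Finset.mem_univ _) hmem
  have hentry : ∀ k : ℕ, k < r → (N ^ k * My.map C * N ^ (r - 1 - k)) 0 (Fin.last r)
      = if k ∈ T then X ^ (v - 1) else 0 := by
    intro k hk
    rw [Matrix.mul_apply, Finset.sum_eq_single (⟨k + 1, by omega⟩ : Fin (r+1))]
    · rw [hrow k (by omega), hN]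
      rw [if_pos (show ((Fin.last r : Fin (r+1)) : ℕ)
        = ((⟨k + 1, by omega⟩ : Fin (r+1)) : ℕ) + (r - 1 - k) by simp [Fin.val_last]; omega)]
      by_cases h3 : k ∈ T
      · rw [if_pos ⟨rfl, h3⟩, if_pos h3]
        -- product computation
        have hsplit : (Finset.range r \ {k}) = Finset.Ico 0 k ∪ Finset.Ico (k+1) r := by
          ext s
          simp only [Finset.mem_sdiff, Finset.mem_range, Finset.mem_singleton,
            Finset.mem_union, Finset.mem_Ico]
          omega
        simp only [Fin.val_mk]
        have h5 : (∏ t ∈ Finset.range (r - 1 - k),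
            e (k + 1 + t)) = ∏ s ∈ Finset.Ico (k+1) r, e s := by
          rw [Finset.prod_Ico_eq_prod_range, show r - (k+1) = r - 1 - k from by omega]
        rw [h5]
        have h6 : (∏ t ∈ Finset.range k, e t) * ∏ s ∈ Finset.Ico (k+1) r, e s
            = ∏ s ∈ Finset.range r \ {k}, e s := by
          rw [hsplit, Finset.prod_union (by
            simp only [Finset.disjoint_left, Finset.mem_Ico]
            intro x hx1 hx2
            omega), Finset.range_eq_Ico]
        rw [h6, he]
        have h7 : ∏ s ∈ Finset.range r \ {k}, (if s ∈ T then (X : Polynomial (ZMod p)) else 1)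
            = ∏ s ∈ (Finset.range r \ {k}) ∩ T, (X : Polynomial (ZMod p)) := by
          rw [Finset.prod_ite_mem]
        have h8 : (Finset.range r \ {k}) ∩ T = T.erase k := by
          ext s
          simp only [Finset.mem_inter, Finset.mem_sdiff, Finset.mem_range,
            Finset.mem_singleton, Finset.mem_erase]
          constructor
          · rintro ⟨⟨_, hs2⟩, hs3⟩; exact ⟨hs2, hs3⟩
          · rintro ⟨hs1, hs2⟩
            exact ⟨⟨Finset.mem_range.mp (hTsub hs2), hs1⟩, hs2⟩
        rw [h7, h8, Finset.prod_const, Finset.card_erase_of_mem h3, hTcard]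
      · rw [if_neg (fun hc => h3 hc.2), if_neg h3, zero_mul]
    · intro l _ hl
      rw [hrow k (by omega), if_neg, zero_mul]
      intro hc
      exact hl (Fin.ext (by simpa using hc.1))
    · intro hmem; exact absurd (Finset.mem_univ _) hmem
  -- assemble
  have hterm : ∀ k ∈ Finset.range r,
      (φ ((((C (FreeAlgebra.ι (ZMod p) (0 : Fin 2)) + X * C (FreeAlgebra.ι (ZMod p) (1 : Fin 2))) ^ k *
            C (FreeAlgebra.ι (ZMod p) (1 : Fin 2)) *
            (C (FreeAlgebra.ι (ZMod p) (0 : Fin 2)) + X * C (FreeAlgebra.ι (ZMod p) (1 : Fin 2))) ^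
              (r - 1 - k))).coeff (v - 1))) 0 (Fin.last r)
        = if k ∈ T then 1 else 0 := by
    intro k hk
    rw [Finset.mem_range] at hk
    have hcm : ∀ q : Polynomial (FreeAlgebra (ZMod p) (Fin 2)),
        φ (q.coeff (v - 1)) = (q.map (φ : FreeAlgebra (ZMod p) (Fin 2) →+* _)).coeff (v - 1) :=
      fun q => (Polynomial.coeff_map _ _).symm
    rw [hcm]
    have hmap : Polynomial.map (φ : FreeAlgebra (ZMod p) (Fin 2) →+* _)
        ((C (FreeAlgebra.ι (ZMod p) (0 : Fin 2)) + X * C (FreeAlgebra.ι (ZMod p) (1 : Fin 2))) ^ k *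
          C (FreeAlgebra.ι (ZMod p) (1 : Fin 2)) *
          (C (FreeAlgebra.ι (ZMod p) (0 : Fin 2)) + X * C (FreeAlgebra.ι (ZMod p) (1 : Fin 2))) ^
            (r - 1 - k))
        = matPolyEquiv (N ^ k * My.map C * N ^ (r - 1 - k)) := by
      rw [map_mul matPolyEquiv, map_mul matPolyEquiv, map_pow, map_pow, hNmat,
        matPolyEquiv_map_C]
      simp only [Polynomial.map_mul, Polynomial.map_pow, Polynomial.map_add,
        Polynomial.map_C, Polynomial.map_X]
      simp only [RingHom.coe_coe, hφx, hφy]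
    rw [hmap, matPolyEquiv_coeff_apply, hentry k hk]
    by_cases h3 : k ∈ T
    · rw [if_pos h3, if_pos h3, Polynomial.coeff_X_pow, if_pos rfl]
    · rw [if_neg h3, if_neg h3, Polynomial.coeff_zero]
  -- final computation
  have main : (φ ((∑ k ∈ Finset.range r,
      ((-1 : ZMod p) ^ k * (Nat.choose (r - 1) k : ZMod p)) •
        ((C (FreeAlgebra.ι (ZMod p) (0 : Fin 2)) + X * C (FreeAlgebra.ι (ZMod p) (1 : Fin 2))) ^ k *
          C (FreeAlgebra.ι (ZMod p) (1 : Fin 2)) *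
          (C (FreeAlgebra.ι (ZMod p) (0 : Fin 2)) + X * C (FreeAlgebra.ι (ZMod p) (1 : Fin 2))) ^
            (r - 1 - k))).coeff (v - 1))) 0 (Fin.last r)
      = ∑ k ∈ T, ((-1 : ZMod p) ^ k * (Nat.choose (r - 1) k : ZMod p)) := by
    rw [Polynomial.finset_sum_coeff]
    simp only [Polynomial.coeff_smul]
    rw [map_sum]
    simp only [map_smul]
    rw [Matrix.sum_apply]
    simp only [Matrix.smul_apply, smul_eq_mul]
    rw [Finset.sum_congr rfl (fun k hk => by rw [hterm k hk])]
    rw [Finset.sum_congr rfl (fun k _ => mul_ite _ _ _ _)]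
    simp only [mul_one, mul_zero]
    rw [Finset.sum_ite_mem, Finset.inter_eq_right.mpr hTsub]
  rw [← main, h0, map_zero, Matrix.zero_apply]
end

section
/- Let p be a prime, r a multiple of p, and fix v with 1 ≤ v ≤ r/2. For a monomial η = y x^{a_1} y x^{a_2} ⋯ y x^{a_v} with a_i ≥ 0 and a_1 + ⋯ + a_v = r - v, its coefficient in Σ_{k=0}^{r-1} (-1)^k C(r-1,k) (x+ty)^k y (x+ty)^{r-1-k} equals t^{v-1} · Σ_{j=0}^{v-1} (-1)^{K_j} C(r-1, K_j), where K_j = j + Σ_{i=1}^{j} a_i (so K_0 = 0). -/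
open Polynomial

/-- The word `η = y x^{a_1} y x^{a_2} ⋯ y x^{a_v}` in the free monoid on two
letters (letter `0` playing the role of `x` and letter `1` that of `y`). -/
def etaWord (v : ℕ) (a : Fin v → ℕ) : FreeMonoid (Fin 2) :=
  (List.ofFn fun i : Fin v =>
    FreeMonoid.of (1 : Fin 2) * (FreeMonoid.of (0 : Fin 2)) ^ (a i)).prod

/-- `K_j = j + Σ_{i=1}^{j} a_i` (so `K_0 = 0`), where `a : Fin v → ℕ` lists
`a_1, …, a_v`. -/
def Kexp (v : ℕ) (a : Fin v → ℕ) (j : ℕ) : ℕ :=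
  j + ∑ i : Fin v, if (i : ℕ) < j then a i else 0

noncomputable section StmtAux

namespace StmtAux

variable (F : Type*) [Field F]

abbrev FM : Type := FreeMonoid (Fin 2)

/-- `x` as element of the monoid algebra. -/
def xe : MonoidAlgebra F FM := MonoidAlgebra.single (FreeMonoid.of 0) 1

/-- `y` as element of the monoid algebra. -/
def ye : MonoidAlgebra F FM := MonoidAlgebra.single (FreeMonoid.of 1) 1

/-- `x + t y` as polynomial in `t` over the monoid algebra. -/
def A : Polynomial (MonoidAlgebra F FM) := C (xe F) + X * C (ye F)

lemma A_def : A F = C (xe F) + X * C (ye F) := rfl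

variable {F}

lemma ma_add_apply (f g : MonoidAlgebra F FM) (w : FM) : (f + g).coeff w = f.coeff w + g.coeff w := rfl

lemma ma_smul_apply (c : F) (f : MonoidAlgebra F FM) (w : FM) : (c • f).coeff w = c * f.coeff w := rfl

instance : DecidableEq FM := inferInstanceAs (DecidableEq (List (Fin 2)))

lemma fin2_em (d : Fin 2) : d = 0 ∨ d = 1 := by
  fin_cases d
  · exact Or.inl rfl
  · exact Or.inr rfl

lemma ma_one_apply (w : FM) : (1 : MonoidAlgebra F FM).coeff w = if w = 1 then 1 else 0 := by
  rw [MonoidAlgebra.one_def,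
    show ((MonoidAlgebra.single (1 : FM) (1 : F)).coeff w) = if (1 : FM) = w then 1 else 0 from
      Finsupp.single_apply]
  simp [eq_comm]

lemma ma_sum_apply {ι : Type*} (s : Finset ι) (f : ι → MonoidAlgebra F FM) (w : FM) :
    (∑ k ∈ s, f k).coeff w = ∑ k ∈ s, (f k).coeff w := by
  classical
  induction s using Finset.induction with
  | empty => rfl
  | insert _ _ h ih => rw [Finset.sum_insert h, Finset.sum_insert h, ma_add_apply, ih]

lemma letter_mul_apply_nil (c : Fin 2) (f : MonoidAlgebra F FM) :
    (MonoidAlgebra.single (FreeMonoid.of c) (1 : F) * f).coeff (1 : FM) = 0 := by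
  apply MonoidAlgebra.single_mul_apply_of_not_exists_mul
  rintro ⟨d, hd⟩
  have := congrArg FreeMonoid.toList hd
  simp [FreeMonoid.toList_of_mul] at this

lemma letter_mul_apply_cons (c d : Fin 2) (f : MonoidAlgebra F FM) (u : List (Fin 2)) :
    (MonoidAlgebra.single (FreeMonoid.of c) (1 : F) * f).coeff (FreeMonoid.ofList (d :: u)) =
      if d = c then f.coeff (FreeMonoid.ofList u) else 0 := by
  split_ifs with h
  · subst h
    rw [MonoidAlgebra.single_mul_apply_aux (m₂ := FreeMonoid.ofList u), one_mul]
    intro a _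
    rw [FreeMonoid.ofList_cons]
    exact mul_left_cancel_iff
  · apply MonoidAlgebra.single_mul_apply_of_not_exists_mul
    rintro ⟨w, hw⟩
    have := congrArg FreeMonoid.toList hw
    rw [FreeMonoid.toList_of_mul] at this
    simp only [FreeMonoid.toList_ofList] at this
    exact h (List.cons.injEq _ _ _ _ ▸ this).1

lemma xe_mul_apply_nil (f : MonoidAlgebra F FM) : (xe F * f).coeff (1 : FM) = 0 :=
  letter_mul_apply_nil 0 f

lemma ye_mul_apply_nil (f : MonoidAlgebra F FM) : (ye F * f).coeff (1 : FM) = 0 :=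
  letter_mul_apply_nil 1 f

lemma xe_mul_apply_cons (d : Fin 2) (f : MonoidAlgebra F FM) (u : List (Fin 2)) :
    (xe F * f).coeff (FreeMonoid.ofList (d :: u)) =
      if d = 0 then f.coeff (FreeMonoid.ofList u) else 0 :=
  letter_mul_apply_cons 0 d f u

lemma ye_mul_apply_cons (d : Fin 2) (f : MonoidAlgebra F FM) (u : List (Fin 2)) :
    (ye F * f).coeff (FreeMonoid.ofList (d :: u)) =
      if d = 1 then f.coeff (FreeMonoid.ofList u) else 0 :=
  letter_mul_apply_cons 1 d f u

lemma pow_mul_coeff (χ : ℕ → List (Fin 2) → F) (R : Polynomial (MonoidAlgebra F FM))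
    (hR : ∀ j u, (R.coeff j).coeff (FreeMonoid.ofList u) = χ j u) :
    ∀ (k j : ℕ) (u : List (Fin 2)),
      (((A F) ^ k * R).coeff j).coeff (FreeMonoid.ofList u) =
        if k ≤ u.length ∧ (u.take k).count 1 ≤ j then
          χ (j - (u.take k).count 1) (u.drop k)
        else 0 := by
  intro k
  induction k with
  | zero =>
      intro j u
      simp [hR]
  | succ k ih =>
      intro j u
      have hmul : (A F) ^ (k + 1) * R
          = C (xe F) * ((A F) ^ k * R) + X * (C (ye F) * ((A F) ^ k * R)) := by
        rw [pow_succ', mul_assoc, A_def, add_mul, mul_assoc]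
      rw [hmul, Polynomial.coeff_add, Polynomial.coeff_C_mul]
      cases j with
      | zero =>
          have h0 : (X * (C (ye F) * ((A F) ^ k * R))).coeff 0 = 0 := by
            simp [Polynomial.mul_coeff_zero]
          rw [h0, add_zero]
          cases u with
          | nil =>
              rw [FreeMonoid.ofList_nil, xe_mul_apply_nil, eq_comm, if_neg]
              rintro ⟨h, -⟩
              simp at h
          | cons d u' =>
              rw [xe_mul_apply_cons]
              rcases fin2_em d with rfl | rfl
              · rw [if_pos rfl, ih 0 u']
                simp only [List.take_succ_cons, List.drop_succ_cons, List.length_cons,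
                  List.count_cons]
                norm_num
              · rw [if_neg (by decide), eq_comm, if_neg]
                rintro ⟨-, hc⟩
                simp [List.take_succ_cons, List.count_cons] at hc
      | succ j =>
          rw [Polynomial.coeff_X_mul, Polynomial.coeff_C_mul]
          cases u with
          | nil =>
              rw [FreeMonoid.ofList_nil, ma_add_apply, xe_mul_apply_nil, ye_mul_apply_nil,
                add_zero, eq_comm, if_neg]
              rintro ⟨h, -⟩
              simp at h
          | cons d u' =>
              rw [ma_add_apply, xe_mul_apply_cons, ye_mul_apply_cons]
              rcases fin2_em d with rfl | rfl
              · rw [if_pos rfl, if_neg (by decide), add_zero, ih (j + 1) u']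
                simp only [List.take_succ_cons, List.drop_succ_cons, List.length_cons,
                  List.count_cons]
                norm_num
              · rw [if_neg (by decide), if_pos rfl, zero_add, ih j u']
                simp only [List.take_succ_cons, List.drop_succ_cons, List.length_cons,
                  List.count_cons]
                norm_num
                rw [Nat.succ_sub_succ]

lemma pow_coeff (m j : ℕ) (u : List (Fin 2)) :
    (((A F) ^ m).coeff j).coeff (FreeMonoid.ofList u) =
      if u.length = m ∧ u.count 1 = j then 1 else 0 := by
  have h1 : ∀ (j : ℕ) (u : List (Fin 2)),
      ((1 : Polynomial (MonoidAlgebra F FM)).coeff j).coeff (FreeMonoid.ofList u)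
        = if u = [] ∧ j = 0 then (1 : F) else 0 := by
    intro j u
    rw [Polynomial.coeff_one]
    by_cases h0 : j = 0
    · subst h0
      rw [if_pos rfl, ma_one_apply]
      by_cases hu : u = []
      · subst hu
        rw [FreeMonoid.ofList_nil, if_pos rfl, if_pos ⟨rfl, rfl⟩]
      · rw [if_neg, if_neg (fun h => hu h.1)]
        intro h
        apply hu
        simpa using congrArg FreeMonoid.toList h
    · rw [if_neg h0, if_neg (fun h => h0 h.2)]
      rfl
  have key := pow_mul_coeff (fun j u => if u = [] ∧ j = 0 then (1 : F) else 0) 1 h1 m j u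
  rw [mul_one] at key
  rw [key]
  have hc : (u.take m).count 1 + (u.drop m).count 1 = u.count 1 := by
    rw [← List.count_append, List.take_append_drop]
  by_cases hS : u.length = m ∧ u.count 1 = j
  · obtain ⟨h1, h2⟩ := hS
    have ht : u.take m = u := List.take_of_length_le (le_of_eq h1)
    have hd : u.drop m = [] := by rw [List.drop_eq_nil_iff]; omega
    rw [if_pos ⟨le_of_eq h1.symm, by rw [ht]; exact le_of_eq h2⟩, hd, ht,
      if_pos ⟨rfl, by omega⟩, if_pos ⟨h1, h2⟩]
  · rw [if_neg hS]
    split_ifs with hP hQ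
    · exfalso
      obtain ⟨hP1, hP2⟩ := hP
      obtain ⟨hd', hj'⟩ := hQ
      rw [List.drop_eq_nil_iff] at hd'
      have hlen : u.length = m := le_antisymm hd' hP1
      have ht : u.take m = u := List.take_of_length_le (le_of_eq hlen)
      rw [ht] at hP2 hj' hc
      exact hS ⟨hlen, by omega⟩
    · rfl
    · rfl

lemma yA_coeff (m j : ℕ) (u : List (Fin 2)) :
    ((C (ye F) * (A F) ^ m).coeff j).coeff (FreeMonoid.ofList u) =
      if u.length = m + 1 ∧ u.take 1 = [1] ∧ u.count 1 = j + 1 then 1 else 0 := by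
  rw [Polynomial.coeff_C_mul]
  cases u with
  | nil =>
      rw [FreeMonoid.ofList_nil, ye_mul_apply_nil, eq_comm, if_neg]
      rintro ⟨-, h, -⟩
      simp at h
  | cons d u' =>
      rw [ye_mul_apply_cons]
      rcases fin2_em d with rfl | rfl
      · rw [if_neg (by decide), eq_comm, if_neg]
        rintro ⟨-, h, -⟩
        simp at h
      · rw [if_pos rfl, pow_coeff]
        simp only [List.length_cons, List.take_succ_cons, List.take_zero, List.count_cons]
        norm_num

lemma term_coeff (k m i : ℕ) (u : List (Fin 2)) :
    (((A F) ^ k * C (ye F) * (A F) ^ m).coeff i).coeff (FreeMonoid.ofList u) =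
      if k ≤ u.length ∧ (u.take k).count 1 ≤ i ∧
          (u.drop k).length = m + 1 ∧ (u.drop k).take 1 = [1] ∧
          (u.drop k).count 1 = (i - (u.take k).count 1) + 1 then 1 else 0 := by
  rw [mul_assoc,
    pow_mul_coeff
      (fun j w => if w.length = m + 1 ∧ w.take 1 = [1] ∧ w.count 1 = j + 1 then (1 : F) else 0)
      _ (yA_coeff m) k i u]
  split_ifs with h1 h2 h3 h3 <;> first | rfl | (exfalso; tauto)

/-- The underlying list of `etaWord`-style words. -/
def wlist (L : List ℕ) : List (Fin 2) :=
  (L.map fun n => (1 : Fin 2) :: List.replicate n 0).flatten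

lemma toList_of_pow (c : Fin 2) (n : ℕ) :
    FreeMonoid.toList (FreeMonoid.of c ^ n) = List.replicate n c := by
  induction n with
  | zero => rfl
  | succ n ih =>
      rw [pow_succ', FreeMonoid.toList_mul, ih, FreeMonoid.toList_of]
      rfl

lemma etaWord_eq (v : ℕ) (a : Fin v → ℕ) :
    etaWord v a = FreeMonoid.ofList (wlist (List.ofFn a)) := by
  apply FreeMonoid.toList.injective
  rw [FreeMonoid.toList_ofList]
  unfold etaWord wlist
  rw [FreeMonoid.toList_prod, List.map_ofFn, List.map_ofFn]
  refine congrArg List.flatten (congrArg List.ofFn (funext fun i => ?_))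
  show FreeMonoid.toList (FreeMonoid.of 1 * FreeMonoid.of 0 ^ a i) = _
  rw [FreeMonoid.toList_of_mul, toList_of_pow]
  rfl

lemma wlist_length (L : List ℕ) : (wlist L).length = L.length + L.sum := by
  induction L with
  | nil => rfl
  | cons n L ih =>
      show ((1 :: List.replicate n 0) ++ wlist L).length = _
      rw [List.length_append, ih]
      simp
      omega

lemma wlist_count (L : List ℕ) : (wlist L).count 1 = L.length := by
  induction L with
  | nil => rfl
  | cons n L ih =>
      show ((1 :: List.replicate n 0) ++ wlist L).count 1 = _
      rw [List.count_append, ih]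
      simp [List.count_replicate]
      omega

lemma key_sum : ∀ (L : List ℕ) (f : ℕ → F),
    (∑ k ∈ Finset.range (wlist L).length,
        if (wlist L).getD k 0 = 1 then f k else 0)
      = ∑ j ∈ Finset.range L.length, f (j + (L.take j).sum) := by
  intro L
  induction L with
  | nil => intro f; simp [wlist]
  | cons n L ih =>
      intro f
      have hw : wlist (n :: L) = (1 :: List.replicate n 0) ++ wlist L := rfl
      rw [hw, List.length_append]
      have hlen : ((1 : Fin 2) :: List.replicate n 0).length = n + 1 := by simp
      rw [hlen, Finset.sum_range_add]
      have hfirst : (∑ k ∈ Finset.range (n + 1),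
          if ((1 :: List.replicate n 0 : List (Fin 2)) ++ wlist L).getD k 0 = 1
          then f k else 0) = f 0 := by
        rw [Finset.sum_range_succ']
        have h0 : (((1 : Fin 2) :: List.replicate n 0) ++ wlist L).getD 0 0 = 1 := rfl
        rw [h0, if_pos rfl]
        have hz : ∀ k ∈ Finset.range n,
            (if (((1 : Fin 2) :: List.replicate n 0) ++ wlist L).getD (k + 1) 0 = 1
            then f (k + 1) else 0) = 0 := by
          intro k hk
          rw [Finset.mem_range] at hk
          have : (((1 : Fin 2) :: List.replicate n 0) ++ wlist L).getD (k + 1) 0 = 0 := by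
            have h1 : (((1 : Fin 2) :: List.replicate n 0) ++ wlist L)
                = (1 : Fin 2) :: (List.replicate n 0 ++ wlist L) := by simp
            rw [h1, List.getD_cons_succ, List.getD_append _ _ _ _ (by simpa using hk)]
            simp [List.getD_eq_getElem?_getD]
          rw [this, if_neg (by decide)]
        rw [Finset.sum_congr rfl hz, Finset.sum_const_zero, zero_add]
      rw [hfirst]
      have hsecond : (∑ k ∈ Finset.range (wlist L).length,
          if (((1 : Fin 2) :: List.replicate n 0) ++ wlist L).getD (n + 1 + k) 0 = 1
          then f (n + 1 + k) else 0)
          = ∑ k ∈ Finset.range (wlist L).length,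
              if (wlist L).getD k 0 = 1 then f (k + (n + 1)) else 0 := by
        apply Finset.sum_congr rfl
        intro k _
        rw [List.getD_append_right _ _ _ _ (by simp)]
        have : n + 1 + k - ((1 : Fin 2) :: List.replicate n 0).length = k := by
          simp
        rw [this, Nat.add_comm (n + 1) k]
      rw [hsecond, ih (fun k => f (k + (n + 1)))]
      rw [List.length_cons, Finset.sum_range_succ']
      simp only [List.take_succ_cons, List.sum_cons, List.take_zero, List.sum_nil]
      rw [add_comm (f 0)]
      congr 1
      apply Finset.sum_congr rfl
      intro j _
      congr 1
      omega

lemma take_sum_getD (L : List ℕ) (j : ℕ) :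
    (L.take j).sum = ∑ k ∈ Finset.range L.length, if k < j then L.getD k 0 else 0 := by
  induction L generalizing j with
  | nil => simp
  | cons n L ih =>
      cases j with
      | zero => simp
      | succ j =>
          rw [List.take_succ_cons, List.sum_cons, ih j, List.length_cons,
            Finset.sum_range_succ']
          simp only [List.getD_cons_succ, List.getD_cons_zero]
          rw [if_pos (Nat.succ_pos j), add_comm]
          congr 1
          apply Finset.sum_congr rfl
          intro k _
          congr 1
          simp [Nat.succ_lt_succ_iff]

lemma Kexp_eq (v : ℕ) (a : Fin v → ℕ) (j : ℕ) :
    Kexp v a j = j + ((List.ofFn a).take j).sum := by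
  rw [Kexp, take_sum_getD]
  congr 1
  rw [← Fin.sum_univ_eq_sum_range (fun k => if k < j then (List.ofFn a).getD k 0 else 0)
    (List.ofFn a).length]
  rw [List.length_ofFn]
  apply Finset.sum_congr rfl
  intro i _
  congr 1
  rw [List.getD_eq_getElem _ _ (by simp [i.isLt])]
  simp

end StmtAux

end StmtAux

open StmtAux in
/-- In the free associative algebra over a field of characteristic `p` on
`x, y`, with `t` a central variable, the coefficient of the monomial
`η = y x^{a_1} y ⋯ y x^{a_v}` (where `a_i ≥ 0`, `Σ a_i = r - v`) in
`Σ_{k=0}^{r-1} (-1)^k C(r-1,k) (x+ty)^k y (x+ty)^{r-1-k}` equals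
`t^{v-1} · Σ_{j=0}^{v-1} (-1)^{K_j} C(r-1, K_j)` with `K_j = j + Σ_{i≤j} a_i`;
i.e. the `η`-coefficient of the `t^i`-coefficient is the displayed sum if
`i = v - 1` and `0` otherwise. -/
theorem stmt_7 (p : ℕ) (hp : p.Prime) (F : Type*) [Field F] [CharP F p]
    (r : ℕ) (hpr : p ∣ r) (v : ℕ) (hv1 : 1 ≤ v) (hv2 : v ≤ r / 2)
    (a : Fin v → ℕ) (ha : ∑ i, a i = r - v) (i : ℕ) :
    MonoidAlgebra.coeff ((FreeAlgebra.equivMonoidAlgebraFreeMonoid (R := F) (X := Fin 2))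
        ((∑ k ∈ Finset.range r,
            ((-1 : F) ^ k * (Nat.choose (r - 1) k : F)) •
              ((C (FreeAlgebra.ι F (0 : Fin 2)) + X * C (FreeAlgebra.ι F (1 : Fin 2))) ^ k *
                C (FreeAlgebra.ι F (1 : Fin 2)) *
                (C (FreeAlgebra.ι F (0 : Fin 2)) + X * C (FreeAlgebra.ι F (1 : Fin 2))) ^
                  (r - 1 - k))).coeff i))
        (etaWord v a) =
      if i = v - 1 then
        ∑ j ∈ Finset.range v,
          (-1 : F) ^ (Kexp v a j) * (Nat.choose (r - 1) (Kexp v a j) : F)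
      else 0 := by
  classical
  set E := FreeAlgebra.equivMonoidAlgebraFreeMonoid (R := F) (X := Fin 2) with hE
  have hEι : ∀ c : Fin 2, E (FreeAlgebra.ι F c) = MonoidAlgebra.single (FreeMonoid.of c) 1 := by
    intro c
    rw [hE]
    simp [FreeAlgebra.equivMonoidAlgebraFreeMonoid, MonoidAlgebra.of_apply]
  set L : List ℕ := List.ofFn a with hL
  set eL : List (Fin 2) := wlist L with heL
  have hvr : 2 * v ≤ r := by
    have := (Nat.le_div_iff_mul_le (by norm_num : 0 < 2)).mp hv2
    omega
  have hlenL : L.length = v := by simp [hL]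
  have hsumL : L.sum = r - v := by
    rw [hL, List.sum_ofFn]
    exact ha
  have hlen : eL.length = r := by
    rw [heL, wlist_length, hlenL, hsumL]
    omega
  have hcnt : eL.count 1 = v := by rw [heL, wlist_count, hlenL]
  -- the per-`k` coefficient computation
  have hterm : ∀ k, k < r →
      ((((A F) ^ k * C (ye F) * (A F) ^ (r - 1 - k)).coeff i).coeff (FreeMonoid.ofList eL) : F)
        = if eL.getD k 0 = 1 ∧ i + 1 = v then 1 else 0 := by
    intro k hk
    rw [term_coeff]
    have hc : (eL.take k).count 1 + (eL.drop k).count 1 = v := by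
      rw [← hcnt, ← List.count_append, List.take_append_drop]
    have hkl : k < eL.length := by omega
    have hdropc : eL.drop k = eL[k] :: eL.drop (k + 1) := List.drop_eq_getElem_cons hkl
    have hgetD : eL.getD k 0 = eL[k] := List.getD_eq_getElem eL 0 hkl
    have hdl : (eL.drop k).length = r - k := by rw [List.length_drop, hlen]
    by_cases hg : eL[k] = (1 : Fin 2)
    · have htake1 : (eL.drop k).take 1 = [1] := by rw [hdropc, hg]; rfl
      have hcd : (eL.drop k).count 1 = (eL.drop (k + 1)).count 1 + 1 := by
        rw [hdropc, List.count_cons, hg]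
        simp
      have hcd1 : 1 ≤ (eL.drop k).count 1 := by omega
      by_cases hiv : i + 1 = v
      · rw [if_pos ⟨by omega, by omega, by omega, htake1, by omega⟩,
          if_pos ⟨by rw [hgetD]; exact hg, hiv⟩]
      · have hRneg : ¬(eL.getD k 0 = 1 ∧ i + 1 = v) := fun h => hiv h.2
        have hLneg : ¬(k ≤ eL.length ∧ List.count 1 (List.take k eL) ≤ i ∧
            (List.drop k eL).length = r - 1 - k + 1 ∧ List.take 1 (List.drop k eL) = [1] ∧
            List.count 1 (List.drop k eL) = i - List.count 1 (List.take k eL) + 1) := by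
          rintro ⟨-, h2, -, -, h5⟩
          omega
        rw [if_neg hLneg, if_neg hRneg]
    · have htake1 : (eL.drop k).take 1 = [eL[k]] := by rw [hdropc]; rfl
      rw [if_neg, if_neg]
      · rw [hgetD]; tauto
      · rintro ⟨-, -, -, h1, -⟩
        rw [htake1] at h1
        exact hg (List.cons.injEq _ _ _ _ ▸ h1).1
  have hEι' : ∀ c : Fin 2,
      E.toAlgHom.toRingHom (FreeAlgebra.ι F c) = MonoidAlgebra.single (FreeMonoid.of c) 1 :=
    fun c => hEι c
  have hQmap : ∀ k : ℕ,
      E (((C (FreeAlgebra.ι F (0 : Fin 2)) + X * C (FreeAlgebra.ι F (1 : Fin 2))) ^ k *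
            C (FreeAlgebra.ι F (1 : Fin 2)) *
            (C (FreeAlgebra.ι F (0 : Fin 2)) + X * C (FreeAlgebra.ι F (1 : Fin 2))) ^
              (r - 1 - k)).coeff i)
        = (((A F) ^ k * C (ye F) * (A F) ^ (r - 1 - k)).coeff i) := by
    intro k
    have h1 : E (((C (FreeAlgebra.ι F (0 : Fin 2)) + X * C (FreeAlgebra.ι F (1 : Fin 2))) ^ k *
            C (FreeAlgebra.ι F (1 : Fin 2)) *
            (C (FreeAlgebra.ι F (0 : Fin 2)) + X * C (FreeAlgebra.ι F (1 : Fin 2))) ^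
              (r - 1 - k)).coeff i)
        = ((((C (FreeAlgebra.ι F (0 : Fin 2)) + X * C (FreeAlgebra.ι F (1 : Fin 2))) ^ k *
            C (FreeAlgebra.ι F (1 : Fin 2)) *
            (C (FreeAlgebra.ι F (0 : Fin 2)) + X * C (FreeAlgebra.ι F (1 : Fin 2))) ^
              (r - 1 - k)).map E.toAlgHom.toRingHom).coeff i) := by
      rw [Polynomial.coeff_map]
      rfl
    rw [h1]
    congr 1
    simp only [Polynomial.map_mul, Polynomial.map_pow, Polynomial.map_add,
      Polynomial.map_C, Polynomial.map_X, hEι', A_def, xe, ye]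
  -- assemble
  rw [etaWord_eq, ← hL, ← heL, Polynomial.finset_sum_coeff, map_sum, ma_sum_apply]
  have step : ∀ k ∈ Finset.range r,
      (E ((((-1 : F) ^ k * (Nat.choose (r - 1) k : F)) •
          ((C (FreeAlgebra.ι F (0 : Fin 2)) + X * C (FreeAlgebra.ι F (1 : Fin 2))) ^ k *
            C (FreeAlgebra.ι F (1 : Fin 2)) *
            (C (FreeAlgebra.ι F (0 : Fin 2)) + X * C (FreeAlgebra.ι F (1 : Fin 2))) ^
              (r - 1 - k))).coeff i)).coeff (FreeMonoid.ofList eL)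
        = ((-1 : F) ^ k * (Nat.choose (r - 1) k : F)) *
            (if eL.getD k 0 = 1 ∧ i + 1 = v then (1 : F) else 0) := by
    intro k hk
    rw [Polynomial.coeff_smul, map_smul, ma_smul_apply, hQmap k,
      hterm k (Finset.mem_range.mp hk)]
  rw [Finset.sum_congr rfl step]
  by_cases hiv : i + 1 = v
  · rw [if_pos (by omega)]
    simp only [hiv, and_true, mul_ite, mul_one, mul_zero]
    rw [heL]
    rw [show Finset.range r = Finset.range (wlist L).length from by rw [← heL, hlen]]
    rw [key_sum L (fun k => (-1 : F) ^ k * (Nat.choose (r - 1) k : F)), hlenL]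
    refine Finset.sum_congr rfl fun j _ => ?_
    rw [Kexp_eq, ← hL]
  · rw [if_neg (by omega)]
    apply Finset.sum_eq_zero
    intro k _
    rw [if_neg (fun h => hiv h.2), mul_zero]
end
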